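/- arXiv:1508.04852 — 3 statements merged into one kernel-verified Lean document; each statement's English description precedes it below -/
import Mathlib

section
/- Morphisms of configuration structures reflect causality: if π : C₁ → C₂ is a morphism, x ∈ C₁, e₁, e₂ ∈ x, and π(e₁) ≤_{π(x)} π(e₂) in C₂ (with both images defined), then e₁ ≤_x e₂ in C₁. -/
/-! Configuration structures (Winskel / van Glabbeek). -/

variable {E E₁ E₂ E₃ L : Type*}

/-- Finiteness axiom of configuration structures. -/
def Finiteness (C : Set (Set E)) : Prop :=
  ∀ x ∈ C, ∀ e ∈ x, ∃ z ∈ C, z.Finite ∧ e ∈ z ∧ z ⊆ x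

/-- Coincidence freeness axiom. -/
def CoincidenceFree (C : Set (Set E)) : Prop :=
  ∀ x ∈ C, ∀ e ∈ x, ∀ e' ∈ x, e ≠ e' → ∃ z ∈ C, z ⊆ x ∧ (e ∈ z ↔ e' ∉ z)

/-- Finite completeness: a family bounded above by a finite configuration has its union in C. -/
def FinComplete (C : Set (Set E)) : Prop :=
  ∀ X ⊆ C, (∃ y ∈ C, y.Finite ∧ ∀ x ∈ X, x ⊆ y) → ⋃₀ X ∈ C

/-- Stability axiom. -/
def Stability (C : Set (Set E)) : Prop :=
  ∀ x ∈ C, ∀ y ∈ C, x ∪ y ∈ C → x ∩ y ∈ C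

/-- `C` is (the configuration family of) a configuration structure. -/
def IsCS (C : Set (Set E)) : Prop :=
  Finiteness C ∧ CoincidenceFree C ∧ FinComplete C ∧ Stability C

/-- Causality order on a configuration `x`: `e₁ ≤ₓ e₂` iff every configuration
`z ⊆ x` containing `e₂` also contains `e₁`. -/
def causeLe (C : Set (Set E)) (x : Set E) (e₁ e₂ : E) : Prop :=
  ∀ z ∈ C, z ⊆ x → e₂ ∈ z → e₁ ∈ z

/-- Image of a set of events under a partial function (partial functions are
modelled as `Option`-valued functions, `none` meaning undefined). -/
def pimg (f : E₁ → Option E₂) (x : Set E₁) : Set E₂ :=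
  {e₂ | ∃ e₁ ∈ x, f e₁ = some e₂}

/-- A morphism of labelled configuration structures: a partial function that is
configuration preserving, locally injective and label preserving. -/
def IsMorphism (C₁ : Set (Set E₁)) (C₂ : Set (Set E₂)) (ℓ₁ : E₁ → L) (ℓ₂ : E₂ → L)
    (f : E₁ → Option E₂) : Prop :=
  (∀ x ∈ C₁, pimg f x ∈ C₂) ∧
  (∀ x ∈ C₁, ∀ e₁ ∈ x, ∀ e₂ ∈ x, ∀ e, f e₁ = some e → f e₂ = some e → e₁ = e₂) ∧
  (∀ x ∈ C₁, ∀ e ∈ x, ∀ e', f e = some e' → ℓ₁ e = ℓ₂ e')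

/-- morphisms of configuration structures reflect causality. -/
theorem morphism_reflects_causality
    (C₁ : Set (Set E₁)) (C₂ : Set (Set E₂)) (ℓ₁ : E₁ → L) (ℓ₂ : E₂ → L)
    (hC₁ : IsCS C₁) (hC₂ : IsCS C₂)
    (f : E₁ → Option E₂) (hf : IsMorphism C₁ C₂ ℓ₁ ℓ₂ f)
    (x : Set E₁) (hx : x ∈ C₁) (e₁ e₂ : E₁) (he₁ : e₁ ∈ x) (he₂ : e₂ ∈ x)
    (a₁ a₂ : E₂) (ha₁ : f e₁ = some a₁) (ha₂ : f e₂ = some a₂)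
    (h : causeLe C₂ (pimg f x) a₁ a₂) :
    causeLe C₁ x e₁ e₂ := by
  intro z hz hzx he₂z
  obtain ⟨hcfg, hinj, -⟩ := hf
  have ha₁' : a₁ ∈ pimg f z :=
    h (pimg f z) (hcfg z hz) (fun b ⟨e, he, hfe⟩ => ⟨e, hzx he, hfe⟩)
      ⟨e₂, he₂z, ha₂⟩
  obtain ⟨e', he'z, hfe'⟩ := ha₁'
  have := hinj x hx e' (hzx he'z) e₁ he₁ a₁ hfe' ha₁
  rwa [← this]
end

section
/- The prefix operation preserves configuration structures: if ⟨E,C⟩ is a configuration structure with ∅ ∈ C and e ∉ E, then the structure with events {e} ∪ E and configurations {∅} ∪ { {e} ∪ x | x ∈ C } satisfies finiteness, coincidence freeness, finite completeness, and stability. -/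
/-! Configuration structures (Winskel / van Glabbeek). -/

variable {E E₁ E₂ E₃ L : Type*}

/-- Configurations of the prefix `α.C`: the fresh event is `none : Option E`;
configurations are `∅` together with `{e} ∪ x` for `x ∈ C`. -/
def prefixC (C : Set (Set E)) : Set (Set (Option E)) :=
  {∅} ∪ {y | ∃ x ∈ C, y = insert none (Option.some '' x)}


lemma insert_none_image_inj {E : Type*} {a b : Set E}
    (h : insert none (Option.some '' a) = insert none (Option.some '' b)) : a = b := by
  ext e
  constructor <;> intro he
  · have h1 : Option.some e ∈ insert none (Option.some '' a) := by simp [he]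
    rw [h] at h1; simpa using h1
  · have h1 : Option.some e ∈ insert none (Option.some '' b) := by simp [he]
    rw [← h] at h1; simpa using h1

lemma mem_prefixC {E : Type*} {C : Set (Set E)} {y : Set (Option E)} :
    y ∈ prefixC C ↔ y = ∅ ∨ ∃ x ∈ C, y = insert none (Option.some '' x) := by
  simp [prefixC]

/-- the prefix operation preserves configuration structures. -/
theorem prefixC_isCS (C : Set (Set E)) (hC : IsCS C) (h0 : ∅ ∈ C) :
    IsCS (prefixC C) := by
  obtain ⟨hFin, hCF, hFC, hStab⟩ := hC
  have hins : ∀ x ∈ C, insert none (Option.some '' x) ∈ prefixC C := by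
    intro x hx; exact mem_prefixC.mpr (Or.inr ⟨x, hx, rfl⟩)
  have hemp : (∅ : Set (Option E)) ∈ prefixC C := mem_prefixC.mpr (Or.inl rfl)
  refine ⟨?_, ?_, ?_, ?_⟩
  · -- Finiteness
    intro y hy e he
    rcases mem_prefixC.mp hy with rfl | ⟨x, hx, rfl⟩
    · simp at he
    · match e with
      | none =>
        refine ⟨insert none (Option.some '' ∅), hins ∅ h0, by simp, by simp, by simp⟩
      | some a =>
        have ha : a ∈ x := by simpa using he
        obtain ⟨z, hz, hzf, haz, hzx⟩ := hFin x hx a ha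
        refine ⟨insert none (Option.some '' z), hins z hz, ?_, by simp [haz], ?_⟩
        · exact (hzf.image _).insert _
        · intro u hu
          rcases hu with rfl | ⟨b, hb, rfl⟩
          · simp
          · exact Set.mem_insert_of_mem _ ⟨b, hzx hb, rfl⟩
  · -- CoincidenceFree
    intro y hy e he e' he' hne
    rcases mem_prefixC.mp hy with rfl | ⟨x, hx, rfl⟩
    · simp at he
    · match e, e' with
      | none, none => exact absurd rfl hne
      | none, some b =>
        refine ⟨insert none (Option.some '' ∅), hins ∅ h0, by simp, by simp⟩
      | some a, none =>
        refine ⟨insert none (Option.some '' ∅), hins ∅ h0, by simp, by simp⟩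
      | some a, some b =>
        have ha : a ∈ x := by simpa using he
        have hb : b ∈ x := by simpa using he'
        have hab : a ≠ b := by rintro rfl; exact hne rfl
        obtain ⟨z, hz, hzx, hiff⟩ := hCF x hx a ha b hb hab
        refine ⟨insert none (Option.some '' z), hins z hz, ?_, by simpa using hiff⟩
        intro u hu
        rcases hu with rfl | ⟨c, hc, rfl⟩
        · simp
        · exact Set.mem_insert_of_mem _ ⟨c, hzx hc, rfl⟩
  · -- FinComplete
    intro X hX ⟨y, hy, hyf, hbound⟩
    by_cases hall : ∀ t ∈ X, t = (∅ : Set (Option E))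
    · have : ⋃₀ X = ∅ := by
        apply Set.eq_empty_iff_forall_notMem.mpr
        rintro u ⟨t, ht, hu⟩
        rw [hall t ht] at hu; exact hu
      rw [this]; exact hemp
    · push_neg at hall
      obtain ⟨t₀, ht₀X, ht₀⟩ := hall
      obtain ⟨x₀, hx₀, rfl⟩ : ∃ x ∈ C, t₀ = insert none (Option.some '' x) := by
        rcases mem_prefixC.mp (hX ht₀X) with rfl | h
        · simp at ht₀
        · exact h
      -- y must be nonempty too
      obtain ⟨y₀, hy₀, rfl⟩ : ∃ x ∈ C, y = insert none (Option.some '' x) := by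
        rcases mem_prefixC.mp hy with rfl | h
        · have := hbound _ ht₀X
          exact absurd (this (Set.mem_insert _ _)) (by simp)
        · exact h
      set X₀ : Set (Set E) := {x | x ∈ C ∧ insert none (Option.some '' x) ∈ X} with hX₀def
      have hX₀C : X₀ ⊆ C := fun x hx => hx.1
      have hy₀f : y₀.Finite := by
        have : Option.some '' y₀ ⊆ insert none (Option.some '' y₀) := Set.subset_insert _ _
        have hf : (Option.some '' y₀).Finite := hyf.subset this
        exact Set.Finite.of_finite_image hf (Option.some_injective E).injOn
      have hbnd : ∀ x ∈ X₀, x ⊆ y₀ := by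
        intro x hx a ha
        have : Option.some a ∈ insert none (Option.some '' y₀) :=
          hbound _ hx.2 (Set.mem_insert_of_mem _ ⟨a, ha, rfl⟩)
        simpa using this
      have hU : ⋃₀ X₀ ∈ C := hFC X₀ hX₀C ⟨y₀, hy₀, hy₀f, hbnd⟩
      have heq : ⋃₀ X = insert none (Option.some '' ⋃₀ X₀) := by
        ext u
        constructor
        · rintro ⟨t, htX, hut⟩
          rcases mem_prefixC.mp (hX htX) with rfl | ⟨x, hx, rfl⟩
          · exact absurd hut (by simp)
          · rcases hut with rfl | ⟨a, ha, rfl⟩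
            · simp
            · exact Set.mem_insert_of_mem _ ⟨a, ⟨x, ⟨hx, htX⟩, ha⟩, rfl⟩
        · rintro (rfl | ⟨a, ⟨x, hx, ha⟩, rfl⟩)
          · exact ⟨_, ht₀X, Set.mem_insert _ _⟩
          · exact ⟨_, hx.2, Set.mem_insert_of_mem _ ⟨a, ha, rfl⟩⟩
      rw [heq]; exact hins _ hU
  · -- Stability
    intro x hx y hy hxy
    rcases mem_prefixC.mp hx with rfl | ⟨x₀, hx₀, rfl⟩
    · simpa using hemp
    rcases mem_prefixC.mp hy with rfl | ⟨y₀, hy₀, rfl⟩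
    · simpa using hemp
    obtain ⟨z₀, hz₀, hz⟩ : ∃ z ∈ C,
        insert none (Option.some '' x₀) ∪ insert none (Option.some '' y₀)
          = insert none (Option.some '' z) := by
      rcases mem_prefixC.mp hxy with h | h
      · have : none ∈ (∅ : Set (Option E)) :=
          h ▸ Set.mem_union_left _ (Set.mem_insert _ _)
        simp at this
      · exact h
    have hunion : insert none (Option.some '' x₀) ∪ insert none (Option.some '' y₀)
        = insert none (Option.some '' (x₀ ∪ y₀)) := by
      rw [Set.image_union, Set.insert_union, Set.union_insert, Set.insert_idem]
    have hz' : x₀ ∪ y₀ = z₀ := insert_none_image_inj (by rw [← hunion, hz])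
    have hUC : x₀ ∪ y₀ ∈ C := hz' ▸ hz₀
    have hIC : x₀ ∩ y₀ ∈ C := hStab x₀ hx₀ y₀ hy₀ hUC
    have hinter : insert none (Option.some '' x₀) ∩ insert none (Option.some '' y₀)
        = insert none (Option.some '' (x₀ ∩ y₀)) := by
      rw [Set.image_inter (Option.some_injective E)]
      rw [Set.insert_inter_distrib]
    rw [hinter]; exact hins _ hIC
end

section
/- In a configuration structure, every finite configuration of cardinality n admits a covering chain from the empty configuration: there exist configurations ∅ = x₀ ⊂ x₁ ⊂ ⋯ ⊂ xₙ = x with |x_{i+1} \ x_i| = 1 for each i. -/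
/-! Configuration structures (Winskel / van Glabbeek). -/

variable {E E₁ E₂ E₃ L : Type*}

lemma drop_event (C : Set (Set E)) (hC : IsCS C)
    (x : Set E) (hx : x ∈ C) (hfin : x.Finite) (hne : x.Nonempty) :
    ∃ e ∈ x, x \ {e} ∈ C := by
  obtain ⟨hFin, hCF, hFC, hSt⟩ := hC
  obtain ⟨e, he, hmax⟩ : ∃ e ∈ x, ∀ e' ∈ x, ({b ∈ x | causeLe C x b e}).ncard
      ≤ ({b ∈ x | causeLe C x b e'}).ncard → ({b ∈ x | causeLe C x b e}).ncard
      = ({b ∈ x | causeLe C x b e'}).ncard := by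
    obtain ⟨a, ha, h⟩ := Set.exists_max_image x
      (fun a => ({b ∈ x | causeLe C x b a}).ncard) hfin hne
    exact ⟨a, ha, fun b hb hab => le_antisymm hab (h b hb)⟩
  refine ⟨e, he, ?_⟩
  have key : ∀ e' ∈ x, e' ≠ e → ∃ z ∈ C, z ⊆ x ∧ e' ∈ z ∧ e ∉ z := by
    intro e' he' hne'
    by_contra hcon
    push_neg at hcon
    have hle : causeLe C x e e' := by
      intro z hz hzx he'z
      exact hcon z hz hzx he'z
    -- d e ⊂ d e'
    have hsub : {b ∈ x | causeLe C x b e} ⊂ {b ∈ x | causeLe C x b e'} := by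
      constructor
      · rintro b ⟨hbx, hb⟩
        refine ⟨hbx, fun z hz hzx he'z => hb z hz hzx (hle z hz hzx he'z)⟩
      · intro hsup
        have he'de' : e' ∈ {b ∈ x | causeLe C x b e'} :=
          ⟨he', fun z _ _ h => h⟩
        have he'de : e' ∉ {b ∈ x | causeLe C x b e} := by
          rintro ⟨_, hle'⟩
          obtain ⟨z, hz, hzx, hiff⟩ := hCF x hx e he e' he' (Ne.symm hne')
          by_cases hez : e ∈ z
          · exact (hiff.mp hez) (hle' z hz hzx hez)
          · have he'z : e' ∈ z := by
              by_contra h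
              exact hez (hiff.mpr h)
            exact hez (hle z hz hzx he'z)
        exact he'de (hsup he'de')
    have hlt : ({b ∈ x | causeLe C x b e}).ncard
        < ({b ∈ x | causeLe C x b e'}).ncard :=
      Set.ncard_lt_ncard hsub (hfin.subset (fun b hb => hb.1))
    exact absurd (hmax e' he' (le_of_lt hlt)) (ne_of_lt hlt)
  have hX : {z | z ∈ C ∧ z ⊆ x ∧ e ∉ z} ⊆ C := fun z hz => hz.1
  have hU : ⋃₀ {z | z ∈ C ∧ z ⊆ x ∧ e ∉ z} ∈ C :=
    hFC _ hX ⟨x, hx, hfin, fun z hz => hz.2.1⟩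
  have heq : ⋃₀ {z | z ∈ C ∧ z ⊆ x ∧ e ∉ z} = x \ {e} := by
    apply Set.Subset.antisymm
    · rintro b ⟨z, ⟨hz, hzx, hez⟩, hbz⟩
      exact ⟨hzx hbz, fun hb => hez (by rwa [Set.mem_singleton_iff.mp hb] at hbz)⟩
    · rintro b ⟨hbx, hbe⟩
      obtain ⟨z, hz, hzx, hbz, hez⟩ := key b hbx (by simpa using hbe)
      exact ⟨z, ⟨hz, hzx, hez⟩, hbz⟩
  rwa [heq] at hU

/-- every finite configuration of cardinality `n` is reachable
from `∅` by a covering chain of configurations adding one event at a time. -/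
theorem covering_chain (C : Set (Set E)) (hC : IsCS C) (h0 : ∅ ∈ C)
    (x : Set E) (hx : x ∈ C) (hfin : x.Finite) (n : ℕ) (hn : x.ncard = n) :
    ∃ c : ℕ → Set E, c 0 = ∅ ∧ c n = x ∧
      (∀ i ≤ n, c i ∈ C) ∧
      (∀ i < n, c i ⊂ c (i + 1) ∧ (c (i + 1) \ c i).ncard = 1) := by
  induction n generalizing x with
  | zero =>
    have : x = ∅ := (Set.ncard_eq_zero hfin).mp hn
    exact ⟨fun _ => ∅, rfl, this.symm, fun _ _ => h0, fun i hi => absurd hi (Nat.not_lt_zero i)⟩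
  | succ m ih =>
    have hne : x.Nonempty := Set.nonempty_of_ncard_ne_zero (by omega)
    obtain ⟨e, he, hy⟩ := drop_event C hC x hx hfin hne
    have hyfin : (x \ {e}).Finite := hfin.diff
    have hycard : (x \ {e}).ncard = m := by
      rw [Set.ncard_diff_singleton_of_mem he, hn]; omega
    obtain ⟨c', h0', hm', hmem', hstep'⟩ := ih (x \ {e}) hy hyfin hycard
    refine ⟨fun i => if i ≤ m then c' i else x, by simp [h0'], by simp, ?_, ?_⟩
    · intro i hi
      by_cases h : i ≤ m
      · simpa [h] using hmem' i h
      · simpa [h] using hx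
    · intro i hi
      by_cases h : i + 1 ≤ m
      · have h2 : i ≤ m := by omega
        simpa [h, h2] using hstep' i (by omega)
      · have h2 : i = m := by omega
        subst h2
        have hsub : x \ {e} ⊂ x := by
          refine ⟨Set.diff_subset, fun hs => ?_⟩
          exact (hs he).2 rfl
        have hdiff : x \ (x \ {e}) = {e} := by
          rw [Set.diff_diff_right, Set.diff_self, Set.empty_union,
            Set.inter_eq_self_of_subset_right (Set.singleton_subset_iff.mpr he)]
        simp only [le_refl, if_pos, Nat.not_succ_le_self, if_neg, not_false_iff]
        rw [hm', hdiff]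
        exact ⟨hsub, Set.ncard_singleton e⟩
end
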